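/- Let $K$ be a number field of degree $d$ and let $M$ be a module lattice of rank $r$ over the ring of integers of $K$ (so $M$ has $\mathbb{Z}$-rank $n = rd$). For any index $1 \le j \le rd$, the successive minima satisfy $\lambda^K_{\lceil j/d \rceil}(M) \le \lambda_j(M) \le \Gamma_K \cdot \lambda^K_{\lceil j/d \rceil}(M)$, where $\lambda_j$ denotes the usual ($\mathbb{Q}$-linear independence) successive minima and $\lambda^K_k$ denotes the $K$-successive minima ($K$-linear independence). -/

import Mathlib

open scoped NumberField

/-- The `j`-th successive minimum of a set `M` (w.r.t. `R`-linear independence):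
the infimum of all `λ > 0` such that `M` contains `j` `R`-linearly independent
vectors of norm at most `λ`. -/
noncomputable def succMin (R : Type*) [Semiring R] {V : Type*} [NormedAddCommGroup V]
    [Module R V] (M : Set V) (j : ℕ) : ℝ :=
  sInf {lam : ℝ | 0 < lam ∧ ∃ v : Fin j → V,
    (∀ i, v i ∈ M) ∧ LinearIndependent R v ∧ ∀ i, ‖v i‖ ≤ lam}

namespace SuccMinAux

open Submodule Module

/-- The feasible set of which `succMin` is the infimum. -/
def Feas (R : Type*) [Semiring R] {V : Type*} [NormedAddCommGroup V]
    [Module R V] (M : Set V) (j : ℕ) : Set ℝ :=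
  {lam : ℝ | 0 < lam ∧ ∃ v : Fin j → V,
    (∀ i, v i ∈ M) ∧ LinearIndependent R v ∧ ∀ i, ‖v i‖ ≤ lam}

theorem succMin_eq (R : Type*) [Semiring R] {V : Type*} [NormedAddCommGroup V]
    [Module R V] (M : Set V) (j : ℕ) : succMin R M j = sInf (Feas R M j) := rfl

theorem Feas_bdd {R : Type*} [Semiring R] {V : Type*} [NormedAddCommGroup V]
    [Module R V] {M : Set V} {j : ℕ} : BddBelow (Feas R M j) :=
  ⟨0, fun _ h => h.1.le⟩

theorem succMin_le {R : Type*} [Semiring R] {V : Type*} [NormedAddCommGroup V]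
    [Module R V] {M : Set V} {j : ℕ} {lam : ℝ} (h : lam ∈ Feas R M j) :
    succMin R M j ≤ lam :=
  csInf_le Feas_bdd h

theorem succMin_nonneg {R : Type*} [Semiring R] {V : Type*} [NormedAddCommGroup V]
    [Module R V] {M : Set V} {j : ℕ} : 0 ≤ succMin R M j :=
  Real.sInf_nonneg fun _ h => h.1.le

variable {K : Type*} [Field K] [NumberField K]
    {V : Type*} [NormedAddCommGroup V]
    [Module ℚ V] [Module K V] [Module (𝓞 K) V]
    [IsScalarTower ℚ K V] [IsScalarTower (𝓞 K) K V]

/-- Scalar multiplication by a fixed vector, as a `ℚ`-linear map from `K`. -/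
noncomputable def phix (x : V) : K →ₗ[ℚ] V :=
  (LinearMap.toSpanSingleton K V x).restrictScalars ℚ

@[simp] lemma phix_apply (x : V) (a : K) : phix (K := K) x a = a • x := rfl

lemma phix_inj {x : V} (hx : x ≠ 0) : Function.Injective (phix (K := K) x) := by
  intro a b hab
  have h : (a - b) • x = 0 := by
    rw [sub_smul]
    have : a • x = b • x := hab
    rw [this, sub_self]
  rcases smul_eq_zero.mp h with h' | h'
  · exact sub_eq_zero.mp h'
  · exact absurd h' hx

/-- Any nonzero `x` generates `finrank ℚ K` many `ℚ`-linearly independent vectors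
inside its `𝓞 K`-span. -/
lemma exists_basevec {x : V} (hx : x ≠ 0) :
    ∃ w : Fin (Module.finrank ℚ K) → V,
      (∀ t, w t ∈ (span (𝓞 K) {x} : Submodule (𝓞 K) V)) ∧ LinearIndependent ℚ w := by
  classical
  let b := NumberField.integralBasis K
  have hcard : Fintype.card (Module.Free.ChooseBasisIndex ℤ (𝓞 K)) = Module.finrank ℚ K :=
    (Module.finrank_eq_card_basis b).symm
  let e : Fin (Module.finrank ℚ K) ≃ Module.Free.ChooseBasisIndex ℤ (𝓞 K) :=
    (Fintype.equivFinOfCardEq hcard).symm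
  refine ⟨fun t => phix (K := K) x (b (e t)), fun t => ?_, ?_⟩
  · show (phix (K := K) x) (b (e t)) ∈ _
    rw [phix_apply]
    rw [show b (e t) = algebraMap (𝓞 K) K (NumberField.RingOfIntegers.basis K (e t)) from
      NumberField.integralBasis_apply K (e t)]
    rw [algebraMap_smul]
    exact Submodule.smul_mem _ _ (Submodule.mem_span_singleton_self x)
  · exact (b.linearIndependent.comp e e.injective).map'
      (phix (K := K) x) (LinearMap.ker_eq_bot.mpr (phix_inj hx))

/-- Combining `ℚ`-independent families inside the `𝓞 K`-spans of `K`-independent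
vectors yields a `ℚ`-independent family. -/
lemma combine_indep {k d : ℕ} (x : Fin k → V) (hK : LinearIndependent K x)
    (w : Fin k → Fin d → V)
    (hw : ∀ i t, w i t ∈ (span (𝓞 K) {x i} : Submodule (𝓞 K) V))
    (hind : ∀ i, LinearIndependent ℚ (w i)) :
    LinearIndependent ℚ (fun p : Fin k × Fin d => w p.1 p.2) := by
  classical
  have ha : ∀ i t, ∃ c : 𝓞 K, c • x i = w i t := fun i t =>
    (Submodule.mem_span_singleton).mp (hw i t)
  choose a haa using ha
  set aK : Fin k → Fin d → K := fun i t => algebraMap (𝓞 K) K (a i t) with haKdef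
  have hwa : ∀ i t, aK i t • x i = w i t := by
    intro i t
    rw [haKdef]
    rw [algebraMap_smul]
    exact haa i t
  have haind : ∀ i, LinearIndependent ℚ (aK i) := by
    intro i
    apply LinearIndependent.of_comp (phix (K := K) (x i))
    have : (phix (K := K) (x i)) ∘ (aK i) = w i := by
      funext t; exact hwa i t
    rw [this]
    exact hind i
  rw [Fintype.linearIndependent_iff]
  intro g hg
  have hsum : ∑ i : Fin k, (∑ t : Fin d, g (i, t) • aK i t) • x i = 0 := by
    rw [← hg, Fintype.sum_prod_type]
    refine Finset.sum_congr rfl fun i _ => ?_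
    rw [Finset.sum_smul]
    refine Finset.sum_congr rfl fun t _ => ?_
    rw [smul_assoc, hwa i t]
  have h1 := Fintype.linearIndependent_iff.mp hK _ hsum
  intro p
  have h2 := Fintype.linearIndependent_iff.mp (haind p.1) (fun t => g (p.1, t)) (h1 p.1) p.2
  simpa using h2

/-- From `j` `ℚ`-independent vectors one can extract `k` `K`-independent ones,
provided `k ≤ ⌈j/d⌉`. -/
lemma exists_K_sub {j k : ℕ} (v : Fin j → V) (hli : LinearIndependent ℚ v)
    (hm : ∀ m : ℕ, j ≤ Module.finrank ℚ K * m → k ≤ m) :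
    ∃ u : Fin k → V, (∀ i, u i ∈ Set.range v) ∧ LinearIndependent K u := by
  classical
  set W : Submodule K V := span K (Set.range v) with hW
  haveI : Module.Finite K W := FiniteDimensional.span_of_finite K (Set.finite_range v)
  haveI : Module.Finite ℚ W := Module.Finite.trans K W
  have hvW : ∀ i, v i ∈ W := fun i => subset_span ⟨i, rfl⟩
  have hli' : LinearIndependent ℚ fun i => (⟨v i, hvW i⟩ : W) :=
    LinearIndependent.of_comp (W.subtype.restrictScalars ℚ) (by exact hli)
  have hjW : j ≤ finrank ℚ W := by
    simpa using hli'.fintype_card_le_finrank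
  have hkW : k ≤ finrank K W := by
    apply hm
    rw [Module.finrank_mul_finrank ℚ K W]
    exact hjW
  obtain ⟨s, hsub, hspan, hsind⟩ := exists_linearIndependent K (Set.range v)
  have hsfin : s.Finite := (Set.finite_range v).subset hsub
  haveI := hsfin.fintype
  have hcard : finrank K W ≤ s.toFinset.card := by
    have h := finrank_span_le_card (R := K) s
    rw [hspan] at h
    exact h
  obtain ⟨t, hts, htcard⟩ := Finset.exists_subset_card_eq (le_trans hkW hcard)
  have htsub : (↑t : Set V) ⊆ s := by
    intro y hy
    rw [← Set.mem_toFinset]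
    exact hts hy
  have htind : LinearIndependent K ((↑) : (↑t : Set V) → V) :=
    LinearIndepOn.mono (v := id) (s := s) hsind htsub
  let e : Fin k ≃ {y // y ∈ t} := (t.equivFin.trans (finCongr htcard)).symm
  refine ⟨fun i => ((e i : V)), fun i => hsub (htsub (Finset.mem_coe.mpr (e i).2)), ?_⟩
  exact htind.comp (fun i => ⟨(e i : V), Finset.mem_coe.mpr (e i).2⟩)
    (fun i i' h => e.injective (Subtype.ext (congrArg Subtype.val h)))

end SuccMinAux

open SuccMinAux Submodule Module in
/-- For a module lattice `M` of rank `r` over the ring of integers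
of a number field `K` of degree `d`, and any `1 ≤ j ≤ rd`,
`λ^K_{⌈j/d⌉}(M) ≤ λ_j(M) ≤ Γ_K λ^K_{⌈j/d⌉}(M)`, where `Γ_K` is characterized by
the property `λ_d(𝓞_K x) ≤ Γ_K λ_1(𝓞_K x)` of rank-1 module lattices. -/
theorem stmt0
    {K : Type*} [Field K] [NumberField K]
    {V : Type*} [NormedAddCommGroup V]
    [Module ℚ V] [Module K V] [Module (𝓞 K) V]
    [IsScalarTower ℚ K V] [IsScalarTower (𝓞 K) K V]
    (r : ℕ) (hr : 0 < r)
    (M : Submodule (𝓞 K) V) [DiscreteTopology M]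
    [Module.Free (𝓞 K) M] (hrank : Module.finrank (𝓞 K) M = r)
    (Γ : ℝ)
    (hΓ : ∀ x ∈ M, x ≠ 0 →
      succMin ℚ ((Submodule.span (𝓞 K) {x} : Submodule (𝓞 K) V) : Set V)
          (Module.finrank ℚ K) ≤
        Γ * succMin ℚ ((Submodule.span (𝓞 K) {x} : Submodule (𝓞 K) V) : Set V) 1)
    (j : ℕ) (hj1 : 1 ≤ j) (hj2 : j ≤ r * Module.finrank ℚ K) :
    succMin K (M : Set V) ⌈(j : ℚ) / (Module.finrank ℚ K : ℚ)⌉₊ ≤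
        succMin ℚ (M : Set V) j ∧
      succMin ℚ (M : Set V) j ≤
        Γ * succMin K (M : Set V) ⌈(j : ℚ) / (Module.finrank ℚ K : ℚ)⌉₊ := by
  classical
  set d : ℕ := Module.finrank ℚ K with hd
  have hd1 : 0 < d := Module.finrank_pos
  set k : ℕ := ⌈(j : ℚ) / (d : ℚ)⌉₊ with hkdef
  have hdQ : (0 : ℚ) < (d : ℚ) := by exact_mod_cast hd1
  have hk1 : 1 ≤ k := by
    rw [hkdef]
    have : (0 : ℚ) < (j : ℚ) / (d : ℚ) := by
      apply div_pos _ hdQ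
      exact_mod_cast hj1
    exact Nat.one_le_iff_ne_zero.mpr (Nat.ceil_pos.mpr this).ne'
  have hkr : k ≤ r := by
    rw [hkdef, Nat.ceil_le, div_le_iff₀ hdQ]
    exact_mod_cast hj2
  have hjkd : j ≤ k * d := by
    have h := Nat.le_ceil ((j : ℚ) / (d : ℚ))
    rw [div_le_iff₀ hdQ] at h
    exact_mod_cast h
  -- Discreteness: a uniform lower bound on norms of nonzero elements of M.
  obtain ⟨ε, hε, hεball⟩ : ∃ ε > 0, ∀ y ∈ M, ‖y‖ < ε → y = 0 := by
    have hopen : IsOpen ({0} : Set M) := isOpen_discrete _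
    rw [Metric.isOpen_singleton_iff] at hopen
    obtain ⟨ε, hε, hb⟩ := hopen
    refine ⟨ε, hε, fun y hy hnorm => ?_⟩
    have := hb ⟨y, hy⟩ (by
      rw [Subtype.dist_eq]
      simpa [dist_eq_norm] using hnorm)
    exact congrArg Subtype.val this
  -- A K-linearly independent family of r vectors in M coming from a basis.
  haveI : Module.Finite (𝓞 K) M := Module.finite_of_finrank_pos (by rw [hrank]; exact hr)
  let b := Module.Free.chooseBasis (𝓞 K) M
  have hcardι : Fintype.card (Module.Free.ChooseBasisIndex (𝓞 K) M) = r := by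
    rw [← hrank]
    exact (Module.finrank_eq_card_chooseBasisIndex (𝓞 K) M).symm
  let eι : Fin r ≃ Module.Free.ChooseBasisIndex (𝓞 K) M :=
    (Fintype.equivFinOfCardEq hcardι).symm
  let X : Fin r → V := fun i => ((b (eι i) : M) : V)
  have hXM : ∀ i, X i ∈ M := fun i => (b (eι i)).2
  have hXO : LinearIndependent (𝓞 K) X := by
    have h1 : LinearIndependent (𝓞 K) fun i => b (eι i) :=
      b.linearIndependent.comp eι eι.injective
    exact h1.map' M.subtype (Submodule.ker_subtype M)
  have hXK : LinearIndependent K X :=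
    hXO.localization (Rₛ := K) (nonZeroDivisors (𝓞 K))
  have hXne : ∀ i, X i ≠ 0 := fun i => hXK.ne_zero i
  -- Γ is nonnegative.
  have hΓ0 : 0 ≤ Γ := by
    set x0 : V := X ⟨0, hr⟩ with hx0
    have hx0M : x0 ∈ M := hXM _
    have hx0ne : x0 ≠ 0 := hXne _
    set L0 : Set V := ((Submodule.span (𝓞 K) {x0} : Submodule (𝓞 K) V) : Set V) with hL0
    have hL0M : ∀ y ∈ L0, y ∈ M := by
      intro y hy
      have : (Submodule.span (𝓞 K) {x0} : Submodule (𝓞 K) V) ≤ M :=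
        Submodule.span_le.mpr (Set.singleton_subset_iff.mpr hx0M)
      exact this hy
    have hne : (Feas ℚ L0 1).Nonempty := by
      refine ⟨‖x0‖, norm_pos_iff.mpr hx0ne, fun _ => x0,
        fun _ => Submodule.mem_span_singleton_self x0, ?_, fun _ => le_rfl⟩
      exact linearIndependent_unique_iff.mpr hx0ne
    have hpos : 0 < succMin ℚ L0 1 := by
      rw [succMin_eq]
      refine lt_of_lt_of_le hε (le_csInf hne ?_)
      rintro lam ⟨hlam, v, hvL, hvind, hvnorm⟩
      by_contra hcon
      push_neg at hcon
      have hv0 : v 0 ≠ 0 := hvind.ne_zero 0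
      exact hv0 (hεball _ (hL0M _ (hvL 0)) (lt_of_le_of_lt (hvnorm 0) hcon))
    have h := hΓ x0 hx0M hx0ne
    nlinarith [succMin_nonneg (R := ℚ) (M := L0) (j := d), hpos, h]
  -- A big ℚ-linearly independent family in M of size r * d.
  obtain ⟨U, hUM, hUind⟩ : ∃ U : Fin r × Fin d → V,
      (∀ p, U p ∈ M) ∧ LinearIndependent ℚ U := by
    have hbase : ∀ i : Fin r, ∃ w : Fin d → V,
        (∀ t, w t ∈ (span (𝓞 K) {X i} : Submodule (𝓞 K) V)) ∧ LinearIndependent ℚ w :=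
      fun i => exists_basevec (hXne i)
    choose w hw1 hw2 using hbase
    refine ⟨fun p => w p.1 p.2, fun p => ?_, combine_indep X hXK w hw1 hw2⟩
    have hle : (span (𝓞 K) {X p.1} : Submodule (𝓞 K) V) ≤ M :=
      Submodule.span_le.mpr (Set.singleton_subset_iff.mpr (hXM p.1))
    exact hle (hw1 p.1 p.2)
  -- Nonemptiness of the ℚ-feasible set at index j.
  have hjrd : j ≤ r * d := hj2
  let Fj : Fin j → Fin r × Fin d := fun i => finProdFinEquiv.symm (Fin.castLE hjrd i)
  have hFjinj : Function.Injective Fj :=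
    finProdFinEquiv.symm.injective.comp (Fin.castLE_injective hjrd)
  have hSQne : (Feas ℚ (M : Set V) j).Nonempty := by
    refine ⟨(∑ p : Fin r × Fin d, ‖U p‖) + 1, ?_, fun i => U (Fj i),
      fun i => hUM _, hUind.comp Fj hFjinj, fun i => ?_⟩
    · positivity
    · have h1 : ‖U (Fj i)‖ ≤ ∑ p : Fin r × Fin d, ‖U p‖ :=
        Finset.single_le_sum (fun p _ => norm_nonneg (U p)) (Finset.mem_univ _)
      linarith
  -- Nonemptiness of the K-feasible set at index k.
  have hSKne : (Feas K (M : Set V) k).Nonempty := by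
    refine ⟨(∑ i : Fin k, ‖X (Fin.castLE hkr i)‖) + 1, ?_,
      fun i => X (Fin.castLE hkr i), fun i => hXM _,
      hXK.comp (Fin.castLE hkr) (Fin.castLE_injective hkr), fun i => ?_⟩
    · positivity
    · have h1 : ‖X (Fin.castLE hkr i)‖ ≤ ∑ i' : Fin k, ‖X (Fin.castLE hkr i')‖ :=
        Finset.single_le_sum (f := fun i' : Fin k => ‖X (Fin.castLE hkr i')‖)
          (fun i' _ => norm_nonneg _) (Finset.mem_univ i)
      linarith
  constructor
  · -- first inequality
    rw [succMin_eq, succMin_eq]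
    refine csInf_le_csInf Feas_bdd hSQne ?_
    rintro lam ⟨hlam, v, hvM, hvind, hvnorm⟩
    obtain ⟨u, hurange, huind⟩ := exists_K_sub (k := k) v hvind (fun m hm => by
      rw [Nat.ceil_le, div_le_iff₀ hdQ]
      calc (j : ℚ) ≤ (d * m : ℕ) := by exact_mod_cast hm
      _ = (m : ℚ) * (d : ℚ) := by push_cast; ring)
    refine ⟨hlam, u, fun i => ?_, huind, fun i => ?_⟩
    · obtain ⟨i', hi'⟩ := hurange i
      rw [← hi']
      exact hvM i'
    · obtain ⟨i', hi'⟩ := hurange i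
      rw [← hi']
      exact hvnorm i'
  · -- second inequality
    have key : ∀ lam ∈ Feas K (M : Set V) k, succMin ℚ (M : Set V) j ≤ Γ * lam := by
      rintro lam ⟨hlam, x, hxM, hxK, hxnorm⟩
      have hxne : ∀ i, x i ≠ 0 := fun i => hxK.ne_zero i
      refine le_of_forall_pos_le_add ?_
      intro εδ hεδ
      -- for each i, get d vectors in the span of x i with norms ≤ Γ * lam + εδ
      have hper : ∀ i : Fin k, ∃ w : Fin d → V,
          (∀ t, w t ∈ (span (𝓞 K) {x i} : Submodule (𝓞 K) V)) ∧
          LinearIndependent ℚ w ∧ ∀ t, ‖w t‖ ≤ Γ * lam + εδ := by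
        intro i
        set Li : Set V := ((Submodule.span (𝓞 K) {x i} : Submodule (𝓞 K) V) : Set V) with hLi
        have h1 : succMin ℚ Li 1 ≤ lam := by
          refine succMin_le ⟨hlam, fun _ => x i,
            fun _ => Submodule.mem_span_singleton_self (x i), ?_, fun _ => hxnorm i⟩
          exact linearIndependent_unique_iff.mpr (hxne i)
        have h2 : succMin ℚ Li d ≤ Γ * lam :=
          le_trans (hΓ (x i) (hxM i) (hxne i)) (by nlinarith)
        have hTne : (Feas ℚ Li d).Nonempty := by
          obtain ⟨w, hw1, hw2⟩ := exists_basevec (K := K) (hxne i)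
          refine ⟨(∑ t : Fin d, ‖w t‖) + 1, by positivity, w, hw1, hw2, fun t => ?_⟩
          have := Finset.single_le_sum (fun t' (_ : t' ∈ Finset.univ) => norm_nonneg (w t'))
            (Finset.mem_univ t)
          linarith
        have hlt : sInf (Feas ℚ Li d) < Γ * lam + εδ := by
          rw [← succMin_eq]
          linarith
        obtain ⟨μ, hμmem, hμlt⟩ := exists_lt_of_csInf_lt hTne hlt
        obtain ⟨hμpos, w, hwL, hwind, hwnorm⟩ := hμmem
        exact ⟨w, hwL, hwind, fun t => le_of_lt (lt_of_le_of_lt (hwnorm t) hμlt)⟩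
      choose w hw1 hw2 hw3 using hper
      have hcomb := combine_indep x hxK w hw1 hw2
      let F : Fin j → Fin k × Fin d := fun i => finProdFinEquiv.symm (Fin.castLE hjkd i)
      have hFinj : Function.Injective F :=
        finProdFinEquiv.symm.injective.comp (Fin.castLE_injective hjkd)
      refine succMin_le ⟨?_, fun i => w (F i).1 (F i).2, fun i => ?_,
        hcomb.comp F hFinj, fun i => hw3 (F i).1 (F i).2⟩
      · nlinarith
      · have hle : (span (𝓞 K) {x (F i).1} : Submodule (𝓞 K) V) ≤ M :=
          Submodule.span_le.mpr (Set.singleton_subset_iff.mpr (hxM (F i).1))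
        exact hle (hw1 (F i).1 (F i).2)
    rcases hΓ0.eq_or_lt with hΓeq | hΓpos
    · obtain ⟨lam, hlam⟩ := hSKne
      have h := key lam hlam
      rw [← hΓeq] at h ⊢
      simpa using h
    · have hdiv : ∀ lam ∈ Feas K (M : Set V) k, succMin ℚ (M : Set V) j / Γ ≤ lam := by
        intro lam hlam
        rw [div_le_iff₀ hΓpos]
        calc succMin ℚ (M : Set V) j ≤ Γ * lam := key lam hlam
        _ = lam * Γ := mul_comm _ _
      have h := le_csInf hSKne hdiv
      rw [div_le_iff₀ hΓpos] at h
      calc succMin ℚ (M : Set V) j ≤ sInf (Feas K (M : Set V) k) * Γ := h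
      _ = Γ * succMin K (M : Set V) k := by rw [succMin_eq]; ring
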